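/- arXiv:2210.11148 — 3 statements merged into one kernel-verified Lean document; each statement's English description precedes it below -/
import Mathlib

section
/- Let H be an abelian group and let ℓ : H → ℝ be a nonnegative function satisfying ℓ(h^m) = |m|·ℓ(h) for all h ∈ H and m ∈ ℤ, and ℓ(gh) ≤ ℓ(g) + ℓ(h) for all g, h ∈ H. Then there exists a seminorm ν on the ℚ-vector space H ⊗ ℚ (i.e. ν : H ⊗ ℚ → ℝ with ν(qv) = |q|·ν(v) for q ∈ ℚ and ν(v+w) ≤ ν(v)+ν(w)) such that ν(p(h)) = ℓ(h) for every h ∈ H, where p : H → H ⊗ ℚ is the natural map h ↦ h ⊗ 1. -/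
open scoped TensorProduct

/-- A nonnegative, homogeneous, subadditive function `ℓ` on an abelian group `H` induces a
seminorm `ν` on the `ℚ`-vector space `ℚ ⊗[ℤ] H` such that `ν (p h) = ℓ h` for the natural
map `p : H → ℚ ⊗[ℤ] H`, `h ↦ 1 ⊗ h`. -/
theorem seminorm_on_rationalization
    {H : Type*} [AddCommGroup H] (ℓ : H → ℝ)
    (hnn : ∀ h : H, 0 ≤ ℓ h)
    (hhom : ∀ (h : H) (m : ℤ), ℓ (m • h) = |(m : ℝ)| * ℓ h)
    (hsub : ∀ g h : H, ℓ (g + h) ≤ ℓ g + ℓ h) :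
    ∃ ν : ℚ ⊗[ℤ] H → ℝ,
      (∀ (q : ℚ) (v : ℚ ⊗[ℤ] H), ν (q • v) = |(q : ℝ)| * ν v) ∧
      (∀ v w : ℚ ⊗[ℤ] H, ν (v + w) ≤ ν v + ν w) ∧
      (∀ h : H, ν ((1 : ℚ) ⊗ₜ[ℤ] h) = ℓ h) := by
  classical
  have hbc : IsBaseChange ℚ (TensorProduct.mk ℤ ℚ H 1) := TensorProduct.isBaseChange ℤ H ℚ
  have hloc : IsLocalizedModule (nonZeroDivisors ℤ) (TensorProduct.mk ℤ ℚ H 1) :=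
    (isLocalizedModule_iff_isBaseChange (nonZeroDivisors ℤ) ℚ _).mpr hbc
  -- kernel of h ↦ 1 ⊗ h is torsion
  have htor : ∀ h : H, ((1 : ℚ) ⊗ₜ[ℤ] h : ℚ ⊗[ℤ] H) = 0 →
      ∃ k : ℤ, k ≠ 0 ∧ k • h = 0 := by
    intro h hh
    obtain ⟨c, hc⟩ := hloc.exists_of_eq (x₁ := h) (x₂ := 0) (by simpa using hh)
    exact ⟨c, nonZeroDivisors.coe_ne_zero c, by simpa [Submonoid.smul_def] using hc⟩
  -- basic smul computation: (a:ℤ) moves across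
  have hmove : ∀ (x : ℚ) (a : ℤ) (h : H),
      (x ⊗ₜ[ℤ] (a • h) : ℚ ⊗[ℤ] H) = ((a : ℚ) * x) ⊗ₜ[ℤ] h := by
    intro x a h
    rw [TensorProduct.tmul_smul, TensorProduct.smul_tmul']
    congr 1
  -- every element has a representation (a:ℚ)⁻¹ ⊗ h with a > 0
  have hrep : ∀ v : ℚ ⊗[ℤ] H, ∃ p : ℤ × H, 0 < p.1 ∧
      v = ((p.1 : ℚ))⁻¹ ⊗ₜ[ℤ] p.2 := by
    intro v
    induction v with
    | zero => exact ⟨(1, 0), one_pos, by simp⟩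
    | tmul q h =>
        refine ⟨((q.den : ℤ), q.num • h), ?_, ?_⟩
        · show (0:ℤ) < (q.den : ℤ); exact_mod_cast q.pos
        · rw [hmove]
          congr 1
          conv_lhs => rw [← Rat.num_div_den q]
          push_cast
          ring
    | add v w hv hw =>
        obtain ⟨⟨a, h⟩, ha, hv'⟩ := hv
        obtain ⟨⟨b, g⟩, hb, hw'⟩ := hw
        simp only at ha hb hv' hw'
        refine ⟨(a * b, b • h + a • g), mul_pos ha hb, ?_⟩
        have ha0 : ((a:ℚ)) ≠ 0 := by exact_mod_cast ha.ne'
        have hb0 : ((b:ℚ)) ≠ 0 := by exact_mod_cast hb.ne'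
        have e1 : ((b:ℚ)) * (((a * b : ℤ) : ℚ))⁻¹ = ((a:ℚ))⁻¹ := by
          push_cast; field_simp; try ring
        have e2 : ((a:ℚ)) * (((a * b : ℤ) : ℚ))⁻¹ = ((b:ℚ))⁻¹ := by
          push_cast; field_simp; try ring
        rw [TensorProduct.tmul_add, hmove, hmove, e1, e2, hv', hw']
  -- well-definedness: the value ℓ h / a only depends on v
  have hkey : ∀ (a b : ℤ) (h g : H), 0 < a → 0 < b →
      (((a : ℚ))⁻¹ ⊗ₜ[ℤ] h : ℚ ⊗[ℤ] H) = ((b : ℚ))⁻¹ ⊗ₜ[ℤ] g →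
      ℓ h / a = ℓ g / b := by
    intro a b h g ha hb e
    have ha0 : ((a:ℚ)) ≠ 0 := by exact_mod_cast ha.ne'
    have hb0 : ((b:ℚ)) ≠ 0 := by exact_mod_cast hb.ne'
    have e1 : ((1 : ℚ) ⊗ₜ[ℤ] (b • h) : ℚ ⊗[ℤ] H) = (1 : ℚ) ⊗ₜ[ℤ] (a • g) := by
      rw [hmove, hmove]
      calc ((b : ℚ) * 1) ⊗ₜ[ℤ] h
          = ((b : ℚ) * (a : ℚ)) • (((a:ℚ))⁻¹ ⊗ₜ[ℤ] h) := by
            rw [TensorProduct.smul_tmul', smul_eq_mul]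
            congr 1; field_simp
        _ = ((b : ℚ) * (a : ℚ)) • (((b:ℚ))⁻¹ ⊗ₜ[ℤ] g) := by rw [e]
        _ = ((a : ℚ) * 1) ⊗ₜ[ℤ] g := by
            rw [TensorProduct.smul_tmul', smul_eq_mul]
            congr 1; field_simp; try ring
    have : ((1 : ℚ) ⊗ₜ[ℤ] (b • h - a • g) : ℚ ⊗[ℤ] H) = 0 := by
      rw [TensorProduct.tmul_sub, e1, sub_self]
    obtain ⟨k, hk0, hk⟩ := htor _ this
    have hk' : (k * b) • h = (k * a) • g := by
      rw [mul_smul, mul_smul, ← sub_eq_zero, ← smul_sub]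
      exact hk
    have hl : |((k * b : ℤ) : ℝ)| * ℓ h = |((k * a : ℤ) : ℝ)| * ℓ g := by
      rw [← hhom, ← hhom, hk']
    have hkne : (k : ℝ) ≠ 0 := Int.cast_ne_zero.mpr hk0
    have haR : (0:ℝ) < (a:ℝ) := by exact_mod_cast ha
    have hbR : (0:ℝ) < (b:ℝ) := by exact_mod_cast hb
    push_cast at hl
    rw [abs_mul, abs_mul, abs_of_pos haR, abs_of_pos hbR] at hl
    have habs : (0:ℝ) < |(k:ℝ)| := abs_pos.mpr hkne
    field_simp
    nlinarith [hl, habs]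
  set ν : ℚ ⊗[ℤ] H → ℝ := fun v =>
    ℓ (Classical.choose (hrep v)).2 / ((Classical.choose (hrep v)).1 : ℝ) with hν
  have hval : ∀ (v : ℚ ⊗[ℤ] H) (a : ℤ) (h : H), 0 < a →
      v = ((a : ℚ))⁻¹ ⊗ₜ[ℤ] h → ν v = ℓ h / a := by
    intro v a h ha hv
    obtain ⟨hpos, hveq⟩ := Classical.choose_spec (hrep v)
    exact hkey _ _ _ _ hpos ha (hveq.symm.trans hv)
  refine ⟨ν, ?_, ?_, ?_⟩
  · intro q v
    obtain ⟨⟨a, h⟩, ha, hv⟩ := hrep v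
    have hden : (0:ℤ) < (q.den : ℤ) := by exact_mod_cast q.pos
    simp only at ha hv
    have ha0 : ((a:ℚ)) ≠ 0 := by exact_mod_cast ha.ne'
    have hd0 : ((q.den:ℚ)) ≠ 0 := by exact_mod_cast q.den_nz
    have h1 : q • v = ((((q.den : ℤ) * a : ℤ) : ℚ))⁻¹ ⊗ₜ[ℤ] (q.num • h) := by
      rw [hv, hmove, TensorProduct.smul_tmul', smul_eq_mul]
      congr 1
      conv_lhs => rw [← Rat.num_div_den q]
      push_cast
      field_simp
    rw [hval _ _ _ (mul_pos hden ha) h1, hval _ _ _ ha hv, hhom]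

    rw [Rat.cast_def, abs_div]
    push_cast
    have hdR : |(q.den : ℝ)| = (q.den : ℝ) := abs_of_pos (by exact_mod_cast q.pos)
    rw [hdR]
    have hdR0 : ((q.den:ℝ)) ≠ 0 := by exact_mod_cast q.den_nz
    have haR0 : ((a:ℝ)) ≠ 0 := by exact_mod_cast ha.ne'
    field_simp
    try ring
  · intro v w
    obtain ⟨⟨a, h⟩, ha, hv⟩ := hrep v
    obtain ⟨⟨b, g⟩, hb, hw⟩ := hrep w
    simp only at ha hb hv hw
    have ha0 : ((a:ℚ)) ≠ 0 := by exact_mod_cast ha.ne'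
    have hb0 : ((b:ℚ)) ≠ 0 := by exact_mod_cast hb.ne'
    have e1 : ((b:ℚ)) * (((a * b : ℤ) : ℚ))⁻¹ = ((a:ℚ))⁻¹ := by
      push_cast; field_simp; try ring
    have e2 : ((a:ℚ)) * (((a * b : ℤ) : ℚ))⁻¹ = ((b:ℚ))⁻¹ := by
      push_cast; field_simp; try ring
    have h1 : v + w = (((a * b : ℤ) : ℚ))⁻¹ ⊗ₜ[ℤ] (b • h + a • g) := by
      rw [hv, hw, TensorProduct.tmul_add, hmove, hmove, e1, e2]
    rw [hval _ _ _ (mul_pos ha hb) h1, hval _ _ _ ha hv, hval _ _ _ hb hw]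
    have haR : (0:ℝ) < (a:ℝ) := by exact_mod_cast ha
    have hbR : (0:ℝ) < (b:ℝ) := by exact_mod_cast hb
    have := hsub (b • h) (a • g)
    rw [hhom, hhom, abs_of_pos hbR, abs_of_pos haR] at this
    push_cast
    calc ℓ (b • h + a • g) / ((a:ℝ) * b)
        ≤ ((b:ℝ) * ℓ h + (a:ℝ) * ℓ g) / ((a:ℝ) * b) := by gcongr
      _ = ℓ h / a + ℓ g / b := by field_simp
  · intro h
    have : ((1 : ℚ) ⊗ₜ[ℤ] h : ℚ ⊗[ℤ] H) = (((1:ℤ) : ℚ))⁻¹ ⊗ₜ[ℤ] h := by norm_num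
    rw [hval _ _ _ one_pos this]
    simp
end

section
/- Let H be an abelian group whose torsion-free rank n := dim_ℚ(H ⊗ ℚ) is finite, and let ℓ : H → ℝ be a nonnegative function satisfying ℓ(h^m) = |m|·ℓ(h) for all h ∈ H and m ∈ ℤ, and ℓ(gh) ≤ ℓ(g) + ℓ(h) for all g, h ∈ H. Suppose there exists ε > 0 such that ℓ(h) ≥ ε for every element h ∈ H of infinite order. Then the image of the natural map p : H → H ⊗ ℚ is a free abelian group of rank n, i.e. p(H) ≅ ℤ^n. -/
open scoped TensorProduct

theorem ell_sum_le {H : Type*} [AddCommGroup H] (ℓ : H → ℝ) (h0 : ℓ 0 = 0)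
    (hsub : ∀ g h : H, ℓ (g + h) ≤ ℓ g + ℓ h) {ι : Type*} (s : Finset ι) (f : ι → H) :
    ℓ (∑ i ∈ s, f i) ≤ ∑ i ∈ s, ℓ (f i) := by
  classical
  induction s using Finset.induction with
  | empty => simp [h0]
  | insert a s hi ih =>
    rw [Finset.sum_insert hi, Finset.sum_insert hi]
    exact (hsub _ _).trans (by linarith)

theorem tmul_eq_zero_torsion {H : Type*} [AddCommGroup H] (h : H)
    (hz : (1 : ℚ) ⊗ₜ[ℤ] h = 0) : IsOfFinAddOrder h := by
  by_contra hfin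
  have hflat : Module.Flat ℤ ℚ := IsLocalization.flat ℚ (nonZeroDivisors ℤ)
  set g : ℤ →ₗ[ℤ] H := LinearMap.toSpanSingleton ℤ H h with hg
  have hginj : Function.Injective g := by
    rw [injective_iff_map_eq_zero]
    intro a ha
    by_contra ha0
    apply hfin
    rw [isOfFinAddOrder_iff_nsmul_eq_zero]
    refine ⟨a.natAbs, Int.natAbs_pos.mpr ha0, ?_⟩
    have : (a.natAbs : ℤ) • h = 0 ∨ (-(a.natAbs : ℤ)) • h = 0 := by
      rcases Int.natAbs_eq a with he | he
      · left; rw [← he]; exact ha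
      · right; rw [← he]; exact ha
    rcases this with hh | hh
    · simpa using hh
    · rw [neg_smul, neg_eq_zero] at hh; simpa using hh
  have hinj := Module.Flat.lTensor_preserves_injective_linearMap (M := ℚ) g hginj
  have heq : (LinearMap.lTensor ℚ g) ((1:ℚ) ⊗ₜ[ℤ] (1:ℤ)) = (1:ℚ) ⊗ₜ[ℤ] h := by
    simp [hg, LinearMap.lTensor_tmul]
  have h1 : ((1:ℚ) ⊗ₜ[ℤ] (1:ℤ)) = 0 := by
    apply hinj
    rw [heq, hz, map_zero]
  have := congrArg (TensorProduct.rid ℤ ℚ) h1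
  simp at this

set_option maxHeartbeats 1000000 in
/-- Let `H` be an abelian group of finite torsion-free rank `n = dim_ℚ (ℚ ⊗[ℤ] H)`, and let
`ℓ : H → ℝ` be nonnegative, homogeneous and subadditive. If `ℓ` is bounded below by some
`ε > 0` on elements of infinite order, then the image of the natural map
`p : H → ℚ ⊗[ℤ] H`, `h ↦ 1 ⊗ h`, is free abelian of rank `n`, i.e. `p(H) ≅ ℤ^n`. -/
theorem image_in_rationalization_is_free
    {H : Type*} [AddCommGroup H]
    [FiniteDimensional ℚ (ℚ ⊗[ℤ] H)]
    (n : ℕ) (hn : n = Module.finrank ℚ (ℚ ⊗[ℤ] H))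
    (ℓ : H → ℝ)
    (hnn : ∀ h : H, 0 ≤ ℓ h)
    (hhom : ∀ (h : H) (m : ℤ), ℓ (m • h) = |(m : ℝ)| * ℓ h)
    (hsub : ∀ g h : H, ℓ (g + h) ≤ ℓ g + ℓ h)
    (ε : ℝ) (hε : 0 < ε)
    (hbound : ∀ h : H, ¬ IsOfFinAddOrder h → ε ≤ ℓ h) :
    Nonempty ((TensorProduct.mk ℤ ℚ H 1).toAddMonoidHom.range ≃+ (Fin n → ℤ)) := by
  classical
  set V := ℚ ⊗[ℤ] H with hV
  set pl : H →ₗ[ℤ] V := TensorProduct.mk ℤ ℚ H 1 with hpl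
  set pf : H → V := fun h => pl h with hpf
  -- span of image is everything
  have hspan : Submodule.span ℚ (Set.range pf) = ⊤ := by
    rw [Submodule.eq_top_iff']
    intro x
    induction x using TensorProduct.induction_on with
    | zero => exact Submodule.zero_mem _
    | tmul q h =>
      have : q ⊗ₜ[ℤ] h = q • pf h := by
        show q ⊗ₜ[ℤ] h = q • ((1:ℚ) ⊗ₜ[ℤ] h)
        rw [TensorProduct.smul_tmul', smul_eq_mul, mul_one]
      rw [this]
      exact Submodule.smul_mem _ _ (Submodule.subset_span ⟨h, rfl⟩)
    | add x y hx hy => exact Submodule.add_mem _ hx hy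
  -- a basis inside the image
  have hli : LinearIndependent ℚ (fun x => x : (∅ : Set V) → V) := linearIndependent_empty ℚ V
  have hli' : LinearIndepOn ℚ id (∅ : Set V) := hli
  set s : Set V := hli'.extend (Set.empty_subset (Set.range pf)) with hs
  have hssub : s ⊆ Set.range pf := hli'.extend_subset _
  have hsli : LinearIndependent ℚ (fun x => x : s → V) := hli'.linearIndepOn_extend _
  have hsspan : Submodule.span ℚ s = ⊤ := by
    rw [eq_top_iff, ← hspan]
    exact Submodule.span_le.mpr (hli'.subset_span_extend _)
  set b0 : Module.Basis s ℚ V := Module.Basis.mk hsli (by rw [Subtype.range_coe, hsspan]) with hb0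
  haveI : Fintype s := FiniteDimensional.fintypeBasisIndex b0
  have hcard : Fintype.card s = n := by
    rw [hn, Module.finrank_eq_card_basis b0]
  set e : s ≃ Fin n := Fintype.equivFinOfCardEq hcard with he
  set B : Module.Basis (Fin n) ℚ V := b0.reindex e with hB
  have hBmem : ∀ i, B i ∈ Set.range pf := by
    intro i
    rw [hB, Module.Basis.reindex_apply, hb0, Module.Basis.mk_apply]
    exact hssub (e.symm i).2
  set hfun : Fin n → H := fun i => (hBmem i).choose with hhfun
  have hfspec : ∀ i, pf (hfun i) = B i := fun i => (hBmem i).choose_spec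
  -- basic facts about ℓ
  have hl0 : ℓ 0 = 0 := by
    have := hhom 0 0
    simpa using this
  have hltor : ∀ h : H, IsOfFinAddOrder h → ℓ h = 0 := by
    intro h hh
    obtain ⟨m, hm, hmh⟩ := isOfFinAddOrder_iff_nsmul_eq_zero.mp hh
    have : ℓ ((m : ℤ) • h) = 0 := by
      rw [natCast_zsmul, hmh, hl0]
    rw [hhom] at this
    have hm' : (0:ℝ) < |((m:ℤ) : ℝ)| := by
      rw [abs_pos]
      have : (m:ℤ) ≠ 0 := by exact_mod_cast hm.ne'
      exact_mod_cast this
    nlinarith [hnn h]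
  have hker : ∀ h : H, pf h = 0 → ℓ h = 0 := fun h hz =>
    hltor h (tmul_eq_zero_torsion h hz)
  -- the main inequality
  have hmain : ∀ h : H, ℓ h ≤ ∑ i, |((B.equivFun (pf h)) i : ℝ)| * ℓ (hfun i) := by
    intro h
    set q : Fin n → ℚ := B.equivFun (pf h) with hq
    set d : ℕ := ∏ i, (q i).den with hd
    have hdpos : 0 < d := Finset.prod_pos (fun i _ => (q i).pos)
    have ha : ∀ i, ∃ a : ℤ, (a : ℚ) = q i * d := by
      intro i
      obtain ⟨k, hk⟩ : ((q i).den : ℤ) ∣ (d : ℤ) := by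
        exact_mod_cast Nat.cast_dvd_cast (Finset.dvd_prod_of_mem _ (Finset.mem_univ i))
      refine ⟨(q i).num * k, ?_⟩
      have h2 : ((q i).den : ℚ) * (k : ℚ) = ((d:ℕ) : ℚ) := by exact_mod_cast hk.symm
      calc (((q i).num * k : ℤ) : ℚ) = ((q i).num : ℚ) * (k:ℚ) := by push_cast; ring
        _ = (q i * (q i).den) * (k:ℚ) := by rw [Rat.mul_den_eq_num]
        _ = q i * (((q i).den : ℚ) * (k:ℚ)) := by ring
        _ = q i * d := by rw [h2]
    choose a haspec using ha
    set t : H := (d : ℤ) • h - ∑ i, a i • hfun i with ht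
    have hpt : pf t = 0 := by
      have h1 : pf t = (d : ℤ) • pf h - ∑ i, a i • pf (hfun i) := by
        show pl t = _
        rw [ht, map_sub, map_sum]
        simp_rw [map_zsmul]
        rfl
      rw [h1]
      simp_rw [hfspec]
      have h3 : pf h = ∑ i, q i • B i := (B.sum_equivFun (pf h)).symm
      rw [h3, ← Int.cast_smul_eq_zsmul ℚ, Finset.smul_sum, sub_eq_zero]
      refine Finset.sum_congr rfl fun i _ => ?_
      rw [smul_smul, ← Int.cast_smul_eq_zsmul ℚ (a i)]
      congr 1
      rw [haspec]
      push_cast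
      ring
    have hlt : ℓ t = 0 := hker t hpt
    -- d • h = t + sum
    have hdh : (d : ℤ) • h = t + ∑ i, a i • hfun i := by rw [ht, sub_add_cancel]
    have hineq : ℓ ((d:ℤ) • h) ≤ ∑ i, |((a i : ℝ))| * ℓ (hfun i) := by
      rw [hdh]
      calc ℓ (t + ∑ i, a i • hfun i) ≤ ℓ t + ℓ (∑ i, a i • hfun i) := hsub _ _
        _ = ℓ (∑ i, a i • hfun i) := by rw [hlt, zero_add]
        _ ≤ ∑ i, ℓ (a i • hfun i) := ell_sum_le ℓ hl0 hsub _ _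
        _ = ∑ i, |((a i : ℝ))| * ℓ (hfun i) := by simp_rw [hhom]
    rw [hhom] at hineq
    have habs : ∀ i, |((a i : ℝ))| = (d:ℝ) * |((q i : ℝ))| := by
      intro i
      have : ((a i : ℝ)) = (q i : ℝ) * d := by
        have := haspec i
        exact_mod_cast congrArg (fun x : ℚ => (x : ℝ)) this
      rw [this, abs_mul, abs_of_nonneg (by positivity : (0:ℝ) ≤ (d:ℝ)), mul_comm]
    simp_rw [habs, mul_assoc] at hineq
    rw [← Finset.mul_sum] at hineq
    have hdr : |((d:ℤ):ℝ)| = (d:ℝ) := by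
      rw [abs_of_nonneg]; · norm_num
      · positivity
    rw [hdr] at hineq
    have := (mul_le_mul_iff_right₀ (by positivity : (0:ℝ) < (d:ℝ))).mp hineq
    exact this
  -- real coordinate map
  set jQ : V →+ (Fin n → ℝ) :=
    { toFun := fun v i => ((B.equivFun v i : ℚ) : ℝ)
      map_zero' := by ext i; simp
      map_add' := by
        intro v w
        funext i
        show ((B.equivFun (v + w) i : ℚ) : ℝ)
          = ((B.equivFun v i : ℚ) : ℝ) + ((B.equivFun w i : ℚ) : ℝ)
        have h1 := congrFun (map_add B.equivFun v w) i
        rw [h1, Pi.add_apply]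
        push_cast
        rfl } with hjQ
  have hjQapp : ∀ (v : V) (i : Fin n), jQ v i = ((B.equivFun v i : ℚ) : ℝ) := fun v i => rfl
  have hjQinj : Function.Injective jQ := by
    intro v w hvw
    have h1 : B.equivFun v = B.equivFun w := by
      ext i
      have := congrFun hvw i
      rw [hjQapp, hjQapp] at this
      exact_mod_cast this
    exact B.equivFun.injective h1
  set φ : H →+ (Fin n → ℝ) := jQ.comp pl.toAddMonoidHom with hφ
  set L : Submodule ℤ (Fin n → ℝ) := AddSubgroup.toIntSubmodule φ.range with hL
  have hmemL : ∀ x : Fin n → ℝ, x ∈ L ↔ ∃ h : H, jQ (pf h) = x := by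
    intro x
    exact Iff.rfl
  set C : ℝ := ∑ i, ℓ (hfun i) with hC
  have hCnn : 0 ≤ C := Finset.sum_nonneg fun i _ => hnn _
  have hδpos : 0 < ε / (C + 1) := by positivity
  -- key separation estimate
  have hkey : ∀ x : Fin n → ℝ, x ∈ L → x ≠ 0 → ε / (C + 1) ≤ ‖x‖ := by
    intro x hx hx0
    obtain ⟨h, hh⟩ := (hmemL x).mp hx
    have hpfh : pf h ≠ 0 := by
      intro hz
      apply hx0
      rw [← hh, hz, map_zero]
    have hord : ¬ IsOfFinAddOrder h := by
      intro hord
      apply hpfh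
      obtain ⟨m, hm, hmh⟩ := isOfFinAddOrder_iff_nsmul_eq_zero.mp hord
      have h1 : pl ((m:ℤ) • h) = 0 := by rw [natCast_zsmul, hmh, map_zero]
      rw [map_zsmul, ← Int.cast_smul_eq_zsmul ℚ, smul_eq_zero] at h1
      rcases h1 with h1 | h1
      · exfalso
        have : ((m:ℤ) : ℚ) ≠ 0 := by
          have : (m:ℤ) ≠ 0 := by exact_mod_cast hm.ne'
          exact_mod_cast this
        exact this h1
      · exact h1
    have hεh : ε ≤ ℓ h := hbound h hord
    have h2 : ∀ i, |((B.equivFun (pf h)) i : ℝ)| ≤ ‖x‖ := by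
      intro i
      have hxi : x i = ((B.equivFun (pf h)) i : ℝ) := by
        rw [← hh, hjQapp]
      rw [← hxi]
      calc |x i| = ‖x i‖ := (Real.norm_eq_abs _).symm
        _ ≤ ‖x‖ := norm_le_pi_norm x i
    have h3 : ℓ h ≤ ‖x‖ * C := by
      calc ℓ h ≤ ∑ i, |((B.equivFun (pf h)) i : ℝ)| * ℓ (hfun i) := hmain h
        _ ≤ ∑ i, ‖x‖ * ℓ (hfun i) :=
          Finset.sum_le_sum fun i _ => mul_le_mul_of_nonneg_right (h2 i) (hnn _)
        _ = ‖x‖ * C := by rw [hC, Finset.mul_sum]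
    rw [div_le_iff₀ (by positivity : (0:ℝ) < C + 1)]
    have hxnn : 0 ≤ ‖x‖ := norm_nonneg x
    nlinarith
  -- discreteness
  haveI hdisc : DiscreteTopology L := by
    refine discreteTopology_iff_isOpen_singleton_zero.mpr ?_
    refine ⟨Metric.ball 0 (ε / (C + 1)), Metric.isOpen_ball, ?_⟩
    ext x
    rw [Set.mem_preimage, mem_ball_zero_iff, Set.mem_singleton_iff]
    constructor
    · intro hx
      by_contra hx0
      have : x ≠ 0 := hx0
      have hx0' : (x : Fin n → ℝ) ≠ 0 := by
        intro hz
        exact this (Subtype.ext hz)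
      exact absurd hx (not_lt.mpr (hkey x x.2 hx0'))
    · intro hx
      rw [hx]
      simpa using hδpos
  -- lattice spans
  haveI hzl : IsZLattice ℝ L := by
    constructor
    rw [eq_top_iff, ← (Pi.basisFun ℝ (Fin n)).span_eq]
    refine Submodule.span_le.mpr ?_
    rintro - ⟨i, rfl⟩
    apply Submodule.subset_span
    show (Pi.basisFun ℝ (Fin n)) i ∈ L
    rw [hmemL]
    refine ⟨hfun i, ?_⟩
    ext j
    rw [hjQapp, hfspec, Pi.basisFun_apply]
    rw [B.equivFun_self]
    by_cases hij : i = j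
    · subst hij; simp
    · simp [hij, Ne.symm hij, Pi.single_apply]
  -- conclusion
  haveI hfree : Module.Free ℤ L := ZLattice.module_free ℝ L
  haveI hfin : Module.Finite ℤ L := ZLattice.module_finite ℝ L
  have hrank : Module.finrank ℤ L = n := by
    rw [ZLattice.rank ℝ L, Module.finrank_fin_fun]
  set bL := Module.Free.chooseBasis ℤ L with hbL
  have hcard2 : Fintype.card (Module.Free.ChooseBasisIndex ℤ L) = n := by
    rw [← Module.finrank_eq_card_chooseBasisIndex, hrank]
  set eIdx : Module.Free.ChooseBasisIndex ℤ L ≃ Fin n := Fintype.equivFinOfCardEq hcard2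
  have e2 : (Module.Free.ChooseBasisIndex ℤ L → ℤ) ≃+ (Fin n → ℤ) :=
    AddEquiv.mk' (Equiv.piCongrLeft' (fun _ => ℤ) eIdx) (fun f g => rfl)
  have equiv4 : L ≃+ (Fin n → ℤ) := bL.equivFun.toAddEquiv.trans e2
  have hrangeeq : AddSubgroup.map jQ pl.toAddMonoidHom.range = φ.range := by
    ext x
    simp [hφ, AddSubgroup.mem_map, AddMonoidHom.mem_range]
  have equiv1 : pl.toAddMonoidHom.range ≃+ (AddSubgroup.map jQ pl.toAddMonoidHom.range) :=
    AddSubgroup.equivMapOfInjective _ jQ hjQinj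
  have equiv2 : (AddSubgroup.map jQ pl.toAddMonoidHom.range) ≃+ φ.range :=
    AddEquiv.addSubgroupCongr hrangeeq
  have equiv3 : φ.range ≃+ L :=
    { toFun := fun x => ⟨x.1, x.2⟩
      invFun := fun x => ⟨x.1, x.2⟩
      left_inv := fun x => rfl
      right_inv := fun x => rfl
      map_add' := fun x y => rfl }
  exact ⟨((equiv1.trans equiv2).trans equiv3).trans equiv4⟩
end

section
/- Let H be an abelian group whose torsion-free rank dim_ℚ(H ⊗ ℚ) is finite and whose torsion subgroup is finite, and let ℓ : H → ℝ be a nonnegative function satisfying ℓ(h^m) = |m|·ℓ(h) for all h ∈ H and m ∈ ℤ, and ℓ(gh) ≤ ℓ(g) + ℓ(h) for all g, h ∈ H. Suppose there exists ε > 0 such that ℓ(h) ≥ ε for every element h ∈ H of infinite order. Then H is finitely generated. -/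
open scoped TensorProduct

/-- Let `H` be an abelian group of finite torsion-free rank (`dim_ℚ (ℚ ⊗[ℤ] H) < ∞`) whose
torsion subgroup is finite, and let `ℓ : H → ℝ` be nonnegative, homogeneous and subadditive.
If `ℓ` is bounded below by some `ε > 0` on elements of infinite order, then `H` is
finitely generated. -/
theorem fg_of_translation_length_function
    {H : Type*} [AddCommGroup H]
    [FiniteDimensional ℚ (ℚ ⊗[ℤ] H)]
    (htors : {h : H | IsOfFinAddOrder h}.Finite)
    (ℓ : H → ℝ)
    (hnn : ∀ h : H, 0 ≤ ℓ h)
    (hhom : ∀ (h : H) (m : ℤ), ℓ (m • h) = |(m : ℝ)| * ℓ h)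
    (hsub : ∀ g h : H, ℓ (g + h) ≤ ℓ g + ℓ h)
    (ε : ℝ) (hε : 0 < ε)
    (hbound : ∀ h : H, ¬ IsOfFinAddOrder h → ε ≤ ℓ h) :
    AddGroup.FG H := by
  classical
  set S := nonZeroDivisors ℤ with hS
  set f : H →ₗ[ℤ] ℚ ⊗[ℤ] H := TensorProduct.mk ℤ ℚ H 1 with hf
  have hbc : IsLocalizedModule S f :=
    (isLocalizedModule_iff_isBaseChange S ℚ f).mpr (TensorProduct.isBaseChange ℤ H ℚ)
  -- the kernel of `f` consists exactly of the torsion elements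
  have hker : ∀ h : H, f h = 0 ↔ IsOfFinAddOrder h := by
    intro h
    rw [IsLocalizedModule.eq_zero_iff S f, isOfFinAddOrder_iff_nsmul_eq_zero]
    constructor
    · rintro ⟨s, hs⟩
      have hs0 : (s : ℤ) ≠ 0 := nonZeroDivisors.coe_ne_zero s
      refine ⟨(s : ℤ).natAbs, Int.natAbs_pos.mpr hs0, ?_⟩
      have hs' : (s : ℤ) • h = 0 := hs
      rw [← natCast_zsmul]
      rcases Int.natAbs_eq (s : ℤ) with he | he
      · rw [← he]; exact hs'
      · have h' : ((s : ℤ).natAbs : ℤ) = -(s : ℤ) := by omega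
        rw [h', neg_zsmul, hs', neg_zero]
    · rintro ⟨n, hn, hnh⟩
      refine ⟨⟨(n : ℤ), mem_nonZeroDivisors_of_ne_zero (by exact_mod_cast hn.ne')⟩, ?_⟩
      show ((n : ℤ)) • h = 0
      rw [natCast_zsmul]; exact hnh
  -- ℓ vanishes at 0 and on torsion elements
  have hl0 : ℓ 0 = 0 := by have := hhom 0 0; simpa using this
  have hltors : ∀ h : H, IsOfFinAddOrder h → ℓ h = 0 := by
    intro h hh
    obtain ⟨n, hn, hnh⟩ := isOfFinAddOrder_iff_nsmul_eq_zero.mp hh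
    have h1 : ((n : ℤ)) • h = 0 := by rw [natCast_zsmul]; exact hnh
    have h2 := hhom h (n : ℤ)
    rw [h1, hl0] at h2
    have hn' : (0 : ℝ) < |((n : ℤ) : ℝ)| := by
      rw [abs_pos]
      exact_mod_cast Int.natCast_ne_zero.mpr hn.ne'
    exact (mul_eq_zero.mp h2.symm).resolve_left hn'.ne'
  -- the range of `f` spans `ℚ ⊗ H` over `ℚ`
  have hspan : Submodule.span ℚ (Set.range f) = ⊤ := by
    rw [eq_top_iff]
    intro x _
    have hx : x ∈ Submodule.span ℤ {t : ℚ ⊗[ℤ] H | ∃ m n, m ⊗ₜ n = t} := by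
      convert (Submodule.mem_top (R := ℤ) (x := x)); exact TensorProduct.span_tmul_eq_top ..
    refine Submodule.span_induction ?_ ?_ ?_ ?_ hx
    · rintro _ ⟨q, h, rfl⟩
      have heq : q ⊗ₜ[ℤ] h = q • ((1 : ℚ) ⊗ₜ[ℤ] h) := by
        rw [TensorProduct.smul_tmul', smul_eq_mul, mul_one]
      rw [heq]
      exact Submodule.smul_mem _ _ (Submodule.subset_span ⟨h, rfl⟩)
    · exact Submodule.zero_mem _
    · intro x y _ _ hx hy; exact Submodule.add_mem _ hx hy
    · intro a x _ hx
      exact Submodule.smul_of_tower_mem _ a hx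
  -- extract a basis of `ℚ ⊗ H` from the image of `H`
  obtain ⟨bs, hbsub, hbspan, hbli⟩ := exists_linearIndependent ℚ (Set.range f)
  have hbfin : bs.Finite := hbli.setFinite
  letI := hbfin.fintype
  let B : Module.Basis ↥bs ℚ (ℚ ⊗[ℤ] H) :=
    Module.Basis.mk hbli (by rw [Subtype.range_coe, hbspan, hspan])
  have hB : ∀ i : ↥bs, B i = (i : ℚ ⊗[ℤ] H) := fun i => Module.Basis.mk_apply _ _ _
  -- choose preimages in `H` of the basis vectors
  have hex : ∀ i : ↥bs, ∃ h : H, f h = (i : ℚ ⊗[ℤ] H) := fun i => hbsub i.2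
  choose e hei using hex
  -- the coordinate map `H → (↥bs → ℝ)`
  let φ : H →ₗ[ℤ] (↥bs → ℝ) :=
    { toFun := fun h i => ((B.repr (f h)) i : ℝ)
      map_add' := by intro x y; funext i; simp
      map_smul' := by
        intro m x; funext i
        simp only [map_smul, map_zsmul, Finsupp.smul_apply, RingHom.id_apply, Pi.smul_apply,
          zsmul_eq_mul]
        push_cast
        ring }
  have hφ : ∀ (h : H) (i : ↥bs), φ h i = ((B.repr (f h)) i : ℝ) := fun _ _ => rfl
  set C : ℝ := (∑ i : ↥bs, ℓ (e i)) + 1 with hC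
  have hCsum : (0 : ℝ) ≤ ∑ i : ↥bs, ℓ (e i) := Finset.sum_nonneg fun i _ => hnn _
  have hCpos : 0 < C := by rw [hC]; linarith
  -- subadditivity on sums
  have hsumle : ∀ (s : Finset ↥bs) (g : ↥bs → ℤ),
      ℓ (∑ i ∈ s, g i • e i) ≤ ∑ i ∈ s, |((g i : ℤ) : ℝ)| * ℓ (e i) := by
    intro s g
    induction s using Finset.induction_on with
    | empty => simp [hl0]
    | insert j s' hj ih =>
      rw [Finset.sum_insert hj, Finset.sum_insert hj]
      calc ℓ (g j • e j + ∑ i ∈ s', g i • e i)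
          ≤ ℓ (g j • e j) + ℓ (∑ i ∈ s', g i • e i) := hsub _ _
        _ ≤ |((g j : ℤ) : ℝ)| * ℓ (e j) + ∑ i ∈ s', |((g i : ℤ) : ℝ)| * ℓ (e i) := by
            rw [hhom]; exact add_le_add le_rfl ih
  -- the key inequality: `ℓ h ≤ C * ‖φ h‖`
  have hkey : ∀ h : H, ℓ h ≤ C * ‖φ h‖ := by
    intro h
    set a := B.repr (f h) with ha
    set m : ℕ := ∏ i : ↥bs, (a i).den with hm
    have hmpos : 0 < m := Finset.prod_pos fun i _ => (a i).pos
    have hden : ∀ i : ↥bs, ∃ k : ℤ, (k : ℚ) = (m : ℚ) * a i := by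
      intro i
      have hdvd : ((a i).den : ℤ) ∣ (m : ℤ) :=
        Int.natCast_dvd_natCast.mpr (Finset.dvd_prod_of_mem _ (Finset.mem_univ i))
      obtain ⟨c, hc⟩ := hdvd
      refine ⟨c * (a i).num, ?_⟩
      have h1 : ((m : ℕ) : ℚ) = ((a i).den : ℚ) * (c : ℚ) := by exact_mod_cast hc
      rw [h1]
      push_cast
      rw [← Rat.mul_den_eq_num (a i)]
      ring
    choose k hk using hden
    set t : H := (m : ℤ) • h - ∑ i : ↥bs, k i • e i with htdef
    have hft : f t = 0 := by
      have h1 : f ((m : ℤ) • h) = ((m : ℕ) : ℚ) • f h := by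
        rw [map_zsmul, ← Int.cast_smul_eq_zsmul ℚ]
        norm_num
      have h2 : f (∑ i : ↥bs, k i • e i) = ((m : ℕ) : ℚ) • f h := by
        rw [map_sum]
        calc ∑ i : ↥bs, f (k i • e i)
            = ∑ i : ↥bs, ((m : ℚ) * a i) • (i : ℚ ⊗[ℤ] H) := by
              refine Finset.sum_congr rfl fun i _ => ?_
              rw [map_zsmul, hei, ← Int.cast_smul_eq_zsmul ℚ, hk i]
          _ = ((m : ℕ) : ℚ) • ∑ i : ↥bs, a i • (i : ℚ ⊗[ℤ] H) := by
              rw [Finset.smul_sum]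
              refine Finset.sum_congr rfl fun i _ => ?_
              rw [mul_smul]
          _ = ((m : ℕ) : ℚ) • f h := by
              congr 1
              have := B.sum_repr (f h)
              simp_rw [hB] at this
              exact this
      rw [htdef, map_sub, h1, h2, sub_self]
    have httors : ℓ t = 0 := hltors t ((hker t).mp hft)
    have hmh : (m : ℤ) • h = (∑ i : ↥bs, k i • e i) + t := by rw [htdef]; abel
    have h4 : ((m : ℕ) : ℝ) * ℓ h = ℓ ((m : ℤ) • h) := by
      rw [hhom]
      congr 1
      rw [abs_of_nonneg (by positivity)]
      norm_num
    have h5 : ℓ ((m : ℤ) • h) ≤ ∑ i : ↥bs, |((k i : ℤ) : ℝ)| * ℓ (e i) := by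
      rw [hmh]
      calc ℓ ((∑ i : ↥bs, k i • e i) + t)
          ≤ ℓ (∑ i : ↥bs, k i • e i) + ℓ t := hsub _ _
        _ = ℓ (∑ i : ↥bs, k i • e i) := by rw [httors, add_zero]
        _ ≤ _ := hsumle Finset.univ k
    have h6 : ∑ i : ↥bs, |((k i : ℤ) : ℝ)| * ℓ (e i) ≤ ((m : ℕ) : ℝ) * (C * ‖φ h‖) := by
      have hb : ∀ i : ↥bs, |((k i : ℤ) : ℝ)| ≤ ((m : ℕ) : ℝ) * ‖φ h‖ := by
        intro i
        have hki : ((k i : ℤ) : ℝ) = ((m : ℕ) : ℝ) * (((a i : ℚ)) : ℝ) := by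
          exact_mod_cast congrArg (fun q : ℚ => (q : ℝ)) (hk i)
        rw [hki, abs_mul, abs_of_nonneg (by positivity : (0:ℝ) ≤ ((m : ℕ) : ℝ))]
        have hai : |(((a i : ℚ)) : ℝ)| ≤ ‖φ h‖ := by
          have hle := norm_le_pi_norm (φ h) i
          rw [hφ, Real.norm_eq_abs] at hle
          rw [← ha] at hle
          exact hle
        exact mul_le_mul_of_nonneg_left hai (by positivity)
      calc ∑ i : ↥bs, |((k i : ℤ) : ℝ)| * ℓ (e i)
          ≤ ∑ i : ↥bs, (((m : ℕ) : ℝ) * ‖φ h‖) * ℓ (e i) :=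
            Finset.sum_le_sum fun i _ => mul_le_mul_of_nonneg_right (hb i) (hnn _)
        _ = ((m : ℕ) : ℝ) * ‖φ h‖ * ∑ i : ↥bs, ℓ (e i) := by rw [← Finset.mul_sum]
        _ ≤ ((m : ℕ) : ℝ) * ‖φ h‖ * C := by
            refine mul_le_mul_of_nonneg_left ?_ (by positivity)
            rw [hC]; linarith
        _ = ((m : ℕ) : ℝ) * (C * ‖φ h‖) := by ring
    have h7 : ((m : ℕ) : ℝ) * ℓ h ≤ ((m : ℕ) : ℝ) * (C * ‖φ h‖) := by
      rw [h4]; exact le_trans h5 h6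
    have hmR : (0 : ℝ) < ((m : ℕ) : ℝ) := by exact_mod_cast hmpos
    exact le_of_mul_le_mul_left h7 hmR
  -- separation of the image
  have hsep : ∀ h : H, φ h ≠ 0 → ε / C ≤ ‖φ h‖ := by
    intro h hφh
    have hfh : ¬ IsOfFinAddOrder h := by
      intro hfin
      apply hφh
      have hz : f h = 0 := (hker h).mpr hfin
      funext i
      rw [hφ, hz]
      simp
    have h1 : ε ≤ ℓ h := hbound h hfh
    have h2 : ℓ h ≤ C * ‖φ h‖ := hkey h
    rw [div_le_iff₀ hCpos, mul_comm]
    linarith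
  -- the image is a discrete subgroup of a finite-dimensional real vector space
  set L := LinearMap.range φ with hL
  have hdisc : DiscreteTopology L := by
    rw [discreteTopology_iff_isOpen_singleton_zero]
    have hset : ({0} : Set L) = (Subtype.val : L → (↥bs → ℝ)) ⁻¹' Metric.ball 0 (ε / C) := by
      ext x
      simp only [Set.mem_singleton_iff, Set.mem_preimage, Metric.mem_ball, dist_zero_right]
      constructor
      · rintro rfl
        simpa using div_pos hε hCpos
      · intro hx
        obtain ⟨h, hh⟩ := x.2
        by_contra hne
        have hxne : (x : ↥bs → ℝ) ≠ 0 := fun h0 => hne (Subtype.ext h0)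
        have := hsep h (by rw [hh]; exact hxne)
        rw [hh] at this
        linarith
    rw [hset]
    exact Metric.isOpen_ball.preimage continuous_subtype_val
  haveI : Module.Finite ℤ L := inferInstance
  have hrange : (LinearMap.range φ).FG := (Submodule.fg_top _).mp this.fg_top
  have hkerfg : (LinearMap.ker φ).FG := by
    have hsub' : (LinearMap.ker φ : Set H) ⊆ {h : H | IsOfFinAddOrder h} := by
      intro h hh
      have hph : φ h = 0 := hh
      have hz : f h = 0 := by
        have hr : B.repr (f h) = 0 := by
          ext i
          have h2 := congrFun hph i
          rw [hφ] at h2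
          simp only [Pi.zero_apply] at h2
          simp only [Finsupp.coe_zero, Pi.zero_apply]
          exact_mod_cast h2
        simpa using (LinearEquiv.map_eq_zero_iff B.repr).mp hr
      exact (hker h).mp hz
    have hfin' : (LinearMap.ker φ : Set H).Finite := htors.subset hsub'
    exact ⟨hfin'.toFinset, by rw [Set.Finite.coe_toFinset, Submodule.span_eq]⟩
  have htop : (⊤ : Submodule ℤ H).FG := by
    apply Submodule.fg_of_fg_map_of_fg_inf_ker φ
    · rwa [Submodule.map_top]
    · rwa [top_inf_eq]
  haveI : Module.Finite ℤ H := ⟨htop⟩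
  exact Module.Finite.iff_addGroup_fg.mp inferInstance
end
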